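/- Let G be a connected simple graph on n vertices with maximum degree Δ that is not Δ-regular. Then λ(G) ≤ √(Δ² − 4/n²) < Δ − 2/(Δn²). -/

import Mathlib

open Matrix

/-- The spectral radius of a real square matrix: the supremum of the absolute
values of its (complex) eigenvalues, i.e. of the roots of its characteristic
polynomial over `ℂ`. -/
noncomputable def specRad {n : ℕ} (R : Matrix (Fin n) (Fin n) ℝ) : ℝ :=
  sSup {r : ℝ | ∃ μ : ℂ, ((R.map (fun a => (a : ℂ))).charpoly).IsRoot μ ∧ r = ‖μ‖}

namespace SpecRadAux

open Finset SimpleGraph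

lemma list_sq_sum_le (l : List ℝ) :
    l.sum ^ 2 ≤ (l.length : ℝ) * (l.map (fun x => x ^ 2)).sum := by
  induction l with
  | nil => simp
  | cons a t ih =>
    have hq : (0:ℝ) ≤ (t.map (fun x => x ^ 2)).sum := by
      apply List.sum_nonneg; intro x hx
      simp only [List.mem_map] at hx
      obtain ⟨z, _, rfl⟩ := hx; positivity
    simp only [List.sum_cons, List.length_cons, List.map_cons]
    push_cast
    rcases eq_or_ne t [] with rfl | ht
    · simp
    · have hL : (1:ℝ) ≤ (t.length : ℝ) := by
        have := List.length_pos_iff.mpr ht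
        exact_mod_cast this
      nlinarith [sq_nonneg ((t.length : ℝ) * a - t.sum), sq_nonneg t.sum,
        mul_nonneg (by positivity : (0:ℝ) ≤ (t.length : ℝ) + 1)
          (sub_nonneg.mpr ih), ih, hq]

lemma walk_telescope {V : Type*} {G : SimpleGraph V} (y : V → ℝ) {a b : V} (p : G.Walk a b) :
    (p.darts.map (fun d => y d.snd - y d.fst)).sum = y b - y a := by
  induction p with
  | nil => simp
  | cons h q ih => simp [ih]

lemma sum_darts_eq {n : ℕ} (G : SimpleGraph (Fin n)) [DecidableRel G.Adj] (f : Fin n → Fin n → ℝ) :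
    ∑ d : G.Dart, f d.fst d.snd = ∑ v, ∑ u, if G.Adj v u then f v u else 0 := by
  have h1 : ∑ v, ∑ u, (if G.Adj v u then f v u else 0)
      = ∑ p : Fin n × Fin n, (if G.Adj p.1 p.2 then f p.1 p.2 else 0) := by
    rw [Fintype.sum_prod_type]
  rw [h1, ← Finset.sum_filter]
  refine Finset.sum_bij'
    (i := fun (d : G.Dart) (_ : d ∈ (Finset.univ : Finset G.Dart)) => (d.fst, d.snd))
    (j := fun (p : Fin n × Fin n) (hp : p ∈ Finset.filter (fun p : Fin n × Fin n => G.Adj p.1 p.2) Finset.univ) =>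
      SimpleGraph.Dart.mk p ((Finset.mem_filter.mp hp).2))
    ?_ ?_ ?_ ?_ ?_
  · intro d _; simp [d.adj]
  · intros; simp
  · intro d _; rfl
  · intro p hp; rfl
  · intro d _; rfl

lemma trail_sum_le {n : ℕ} (G : SimpleGraph (Fin n)) [DecidableRel G.Adj] (y : Fin n → ℝ)
    {a b : Fin n} (p : G.Walk a b) (hp : p.IsTrail) :
    2 * (p.darts.map (fun d => (y d.snd - y d.fst) ^ 2)).sum
      ≤ ∑ d : G.Dart, (y d.snd - y d.fst) ^ 2 := by
  classical
  set l := p.darts with hl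
  have hnd : l.Nodup := by
    have := hp.edges_nodup
    rw [SimpleGraph.Walk.edges] at this
    exact this.of_map _
  have hinj : ∀ d ∈ l, ∀ e ∈ l, d.edge = e.edge → d = e := by
    have := hp.edges_nodup
    rw [SimpleGraph.Walk.edges] at this
    exact fun d hd e he h => List.inj_on_of_nodup_map this hd he h
  have hndm : (l.map SimpleGraph.Dart.symm).Nodup := by
    refine hnd.map ?_
    intro d e h
    have := congrArg SimpleGraph.Dart.symm h
    simpa using this
  have hdisj : l.Disjoint (l.map SimpleGraph.Dart.symm) := by
    intro d hd hdm
    rw [List.mem_map] at hdm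
    obtain ⟨e, he, rfl⟩ := hdm
    have : e.symm = e := hinj _ hd _ he (by simp)
    exact e.symm_ne this
  set L := l ++ l.map SimpleGraph.Dart.symm with hL
  have hndL : L.Nodup := by
    rw [List.nodup_append]
    exact ⟨hnd, hndm, fun a ha b hb hab => by subst hab; exact hdisj ha hb⟩
  have hsum : (L.map (fun d => (y d.snd - y d.fst) ^ 2)).sum
      = 2 * (l.map (fun d => (y d.snd - y d.fst) ^ 2)).sum := by
    rw [hL, List.map_append, List.sum_append, List.map_map]
    have : (fun d => (y d.snd - y d.fst) ^ 2) ∘ SimpleGraph.Dart.symm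
        = fun d : G.Dart => (y d.snd - y d.fst) ^ 2 := by
      funext d
      simp [SimpleGraph.Dart.symm]
      ring
    rw [this]; ring
  calc 2 * (l.map (fun d => (y d.snd - y d.fst) ^ 2)).sum
      = (L.map (fun d => (y d.snd - y d.fst) ^ 2)).sum := hsum.symm
    _ = ∑ d ∈ L.toFinset, (y d.snd - y d.fst) ^ 2 := by
        rw [List.sum_toFinset _ hndL]
    _ ≤ ∑ d : G.Dart, (y d.snd - y d.fst) ^ 2 := by
        apply Finset.sum_le_sum_of_subset_of_nonneg (Finset.subset_univ _)
        intros; positivity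

/-- For reachable `a b`, `2 (y a - y b)² ≤ (n-1) * Σ_darts (y d.snd - y d.fst)²`. -/
lemma reach_sq_le {n : ℕ} (G : SimpleGraph (Fin n)) [DecidableRel G.Adj] (y : Fin n → ℝ)
    {a b : Fin n} (h : G.Reachable a b) :
    2 * (y a - y b) ^ 2 ≤ ((n : ℝ) - 1) * ∑ d : G.Dart, (y d.snd - y d.fst) ^ 2 := by
  classical
  obtain ⟨p0⟩ := h
  obtain ⟨q, hq⟩ := p0.toPath
  have hlen : (q.length : ℝ) ≤ (n : ℝ) - 1 := by
    have := hq.length_lt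
    rw [Fintype.card_fin] at this
    have : q.length + 1 ≤ n := this
    have := (Nat.cast_le (α := ℝ)).mpr this
    push_cast at this
    linarith
  have hdartlen : (q.darts.length : ℝ) = (q.length : ℝ) := by
    rw [SimpleGraph.Walk.length_darts]
  have htel : (q.darts.map (fun d => y d.snd - y d.fst)).sum = y b - y a :=
    walk_telescope y q
  have hCS := list_sq_sum_le (q.darts.map (fun d => y d.snd - y d.fst))
  rw [htel, List.map_map, List.length_map] at hCS
  have hmapeq : (q.darts.map ((fun x => x ^ 2) ∘ fun d => y d.snd - y d.fst))
      = q.darts.map (fun d => (y d.snd - y d.fst) ^ 2) := by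
    simp [Function.comp]
  rw [hmapeq] at hCS
  have hsq : (y a - y b) ^ 2 = (y b - y a) ^ 2 := by ring
  have hnn : (0:ℝ) ≤ (q.darts.map (fun d => (y d.snd - y d.fst) ^ 2)).sum := by
    apply List.sum_nonneg; intro x hx
    simp only [List.mem_map] at hx
    obtain ⟨z, _, rfl⟩ := hx; positivity
  have h2 := trail_sum_le G y q hq.isTrail
  have hq1 : (y b - y a) ^ 2 ≤ ((n:ℝ) - 1) * (q.darts.map (fun d => (y d.snd - y d.fst) ^ 2)).sum := by
    calc (y b - y a) ^ 2 ≤ (q.darts.length : ℝ) * (q.darts.map (fun d => (y d.snd - y d.fst) ^ 2)).sum := hCS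
      _ ≤ ((n:ℝ) - 1) * (q.darts.map (fun d => (y d.snd - y d.fst) ^ 2)).sum := by
          apply mul_le_mul_of_nonneg_right _ hnn
          rw [hdartlen]; exact hlen
  rw [hsq]
  calc 2 * (y b - y a) ^ 2
      ≤ ((n:ℝ) - 1) * (2 * (q.darts.map (fun d => (y d.snd - y d.fst) ^ 2)).sum) := by linarith
    _ ≤ ((n : ℝ) - 1) * ∑ d : G.Dart, (y d.snd - y d.fst) ^ 2 := by
        apply mul_le_mul_of_nonneg_left h2
        have : (1:ℝ) ≤ (n:ℝ) := by
          have : q.length + 1 ≤ n := by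
            have := hq.length_lt; rwa [Fintype.card_fin] at this
          have := (Nat.cast_le (α := ℝ)).mpr this; push_cast at this; linarith
        linarith

variable {n : ℕ} (G : SimpleGraph (Fin n)) [DecidableRel G.Adj]

lemma sum_ite_adj (v : Fin n) : ∑ u, (if G.Adj v u then (1:ℝ) else 0) = G.degree v := by
  rw [Finset.sum_boole]
  congr 1
  rw [SimpleGraph.degree]
  congr 1
  ext u
  simp

lemma ite_adj_comm (v u : Fin n) :
    (if G.Adj v u then (1:ℝ) else 0) = if G.Adj u v then (1:ℝ) else 0 := by
  by_cases h : G.Adj v u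
  · simp [h, h.symm]
  · have h' : ¬ G.Adj u v := fun h' => h h'.symm
    simp [h, h']

lemma quad_id (y : Fin n → ℝ) :
    ∑ v, ∑ u, (if G.Adj v u then (1:ℝ) else 0) * (y v * y u)
      = ∑ v, (G.degree v : ℝ) * y v ^ 2
        - (1/2) * ∑ v, ∑ u, (if G.Adj v u then (1:ℝ) else 0) * (y v - y u) ^ 2 := by
  have key : ∀ v u : Fin n, (if G.Adj v u then (1:ℝ) else 0) * (y v - y u) ^ 2
      = (if G.Adj v u then (1:ℝ) else 0) * y v ^ 2
        + (if G.Adj v u then (1:ℝ) else 0) * y u ^ 2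
        - 2 * ((if G.Adj v u then (1:ℝ) else 0) * (y v * y u)) := by
    intro v u; ring
  have h2 : ∀ v : Fin n, ∑ u, (if G.Adj v u then (1:ℝ) else 0) * y v ^ 2
      = (G.degree v : ℝ) * y v ^ 2 := by
    intro v
    rw [← Finset.sum_mul, sum_ite_adj]
  have h3 : ∑ v, ∑ u, (if G.Adj v u then (1:ℝ) else 0) * y u ^ 2
      = ∑ v, (G.degree v : ℝ) * y v ^ 2 := by
    rw [Finset.sum_comm]
    apply Finset.sum_congr rfl
    intro u _
    calc ∑ v, (if G.Adj v u then (1:ℝ) else 0) * y u ^ 2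
        = ∑ v, (if G.Adj u v then (1:ℝ) else 0) * y u ^ 2 := by
          apply Finset.sum_congr rfl; intro v _; rw [ite_adj_comm]
      _ = (G.degree u : ℝ) * y u ^ 2 := h2 u
  have expand : ∑ v, ∑ u, (if G.Adj v u then (1:ℝ) else 0) * (y v - y u) ^ 2
      = ∑ v, (G.degree v : ℝ) * y v ^ 2 + ∑ v, (G.degree v : ℝ) * y v ^ 2
        - 2 * ∑ v, ∑ u, (if G.Adj v u then (1:ℝ) else 0) * (y v * y u) := by
    simp_rw [key, Finset.sum_sub_distrib, Finset.sum_add_distrib, h2, ← Finset.mul_sum]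
    rw [h3]
  linarith [expand]



lemma quad_decomp (y : Fin n → ℝ) (hy : ∀ v, 0 ≤ y v) (W : Finset (Fin n))
    (hW : ∀ v ∈ W, G.degree v + 1 ≤ G.maxDegree) :
    ∑ v, ∑ u, (if G.Adj v u then (1:ℝ) else 0) * (y v * y u)
      ≤ (G.maxDegree : ℝ) * ∑ v, y v ^ 2 - ∑ v ∈ W, y v ^ 2
        - (1/2) * ∑ v, ∑ u, (if G.Adj v u then (1:ℝ) else 0) * (y v - y u) ^ 2 := by
  rw [quad_id]
  have hsplit : ∑ v, (G.degree v : ℝ) * y v ^ 2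
      = (G.maxDegree : ℝ) * ∑ v, y v ^ 2 - ∑ v, ((G.maxDegree : ℝ) - G.degree v) * y v ^ 2 := by
    rw [Finset.mul_sum, ← Finset.sum_sub_distrib]
    apply Finset.sum_congr rfl
    intro v _; ring
  have h2 : ∑ v ∈ W, y v ^ 2 ≤ ∑ v, ((G.maxDegree : ℝ) - G.degree v) * y v ^ 2 := by
    calc ∑ v ∈ W, y v ^ 2 ≤ ∑ v ∈ W, ((G.maxDegree : ℝ) - G.degree v) * y v ^ 2 := by
          apply Finset.sum_le_sum
          intro v hv
          have h1 : (G.degree v : ℝ) + 1 ≤ (G.maxDegree : ℝ) := by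
            exact_mod_cast hW v hv
          nlinarith [sq_nonneg (y v)]
      _ ≤ ∑ v, ((G.maxDegree : ℝ) - G.degree v) * y v ^ 2 := by
          apply Finset.sum_le_sum_of_subset_of_nonneg (Finset.subset_univ W)
          intro v _ _
          have := G.degree_le_maxDegree v
          have : (G.degree v : ℝ) ≤ (G.maxDegree : ℝ) := by exact_mod_cast this
          nlinarith [sq_nonneg (y v)]
  linarith [hsplit, h2]

lemma specRad_le_of_quad {n : ℕ} (G : SimpleGraph (Fin n)) [DecidableRel G.Adj] {c : ℝ}
    (hc : 0 ≤ c)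
    (hQ : ∀ y : Fin n → ℝ, (∀ v, 0 ≤ y v) →
      ∑ v, ∑ u, (if G.Adj v u then (1:ℝ) else 0) * (y v * y u) ≤ c * ∑ v, y v ^ 2) :
    specRad (G.adjMatrix ℝ) ≤ c := by
  apply Real.sSup_le _ hc
  rintro r ⟨μ, hroot, rfl⟩
  set A' := ((G.adjMatrix ℝ).map (fun a => (a : ℂ))) with hA'
  have hdet : det (Matrix.scalar (Fin n) μ - A') = 0 := by
    have h := hroot
    rw [Polynomial.IsRoot, Matrix.charpoly, eval_det, Matrix.matPolyEquiv_charmatrix,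
      Polynomial.eval_sub, Polynomial.eval_X, Polynomial.eval_C] at h
    exact h
  obtain ⟨x, hx0, hxe⟩ := (Matrix.exists_mulVec_eq_zero_iff).2 hdet
  have heig : ∀ v, μ * x v = ∑ u, A' v u * x u := by
    intro v
    have h1 : ((Matrix.scalar (Fin n) μ - A') *ᵥ x) v = 0 := by rw [hxe]; rfl
    rw [Matrix.sub_mulVec] at h1
    have h2 : (Matrix.scalar (Fin n) μ *ᵥ x) v = μ * x v := by
      simp [Matrix.mulVec, dotProduct, Matrix.scalar_apply, Matrix.diagonal_apply,
        ite_mul, zero_mul]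
    have h3 : (A' *ᵥ x) v = ∑ u, A' v u * x u := rfl
    have h4 : (Matrix.scalar (Fin n) μ *ᵥ x) v - (A' *ᵥ x) v = 0 := by
      have : ((Matrix.scalar (Fin n) μ *ᵥ x) - (A' *ᵥ x)) v = 0 := by rw [h1]
      simpa using this
    rw [h2, h3] at h4
    exact sub_eq_zero.mp h4
  set y : Fin n → ℝ := fun v => ‖x v‖ with hy'
  have hy : ∀ v, 0 ≤ y v := fun v => norm_nonneg _
  have habs : ∀ v u, ‖A' v u * x u‖ = (if G.Adj v u then (1:ℝ) else 0) * y u := by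
    intro v u
    rw [norm_mul]
    congr 1
    rw [hA']
    by_cases h : G.Adj v u <;> simp [Matrix.map_apply, SimpleGraph.adjMatrix_apply, h]
  have hkey : ∀ v, ‖μ‖ * y v ≤ ∑ u, (if G.Adj v u then (1:ℝ) else 0) * y u := by
    intro v
    have h1 : ‖μ‖ * y v = ‖μ * x v‖ := by rw [norm_mul]
    rw [h1, heig v]
    calc ‖∑ u, A' v u * x u‖ ≤ ∑ u, ‖A' v u * x u‖ :=
          norm_sum_le _ _
      _ = ∑ u, (if G.Adj v u then (1:ℝ) else 0) * y u := by
          apply Finset.sum_congr rfl; intro u _; exact habs v u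
  have hT : 0 < ∑ v, y v ^ 2 := by
    have : ∃ v, x v ≠ 0 := by
      by_contra h
      push_neg at h
      exact hx0 (funext h)
    obtain ⟨v, hv⟩ := this
    apply Finset.sum_pos' (fun i _ => by positivity)
    refine ⟨v, Finset.mem_univ v, ?_⟩
    have : 0 < ‖x v‖ := by
      simpa using hv
    positivity
  have hmain : ‖μ‖ * (∑ v, y v ^ 2) ≤ c * ∑ v, y v ^ 2 := by
    calc ‖μ‖ * (∑ v, y v ^ 2) = ∑ v, (‖μ‖ * y v) * y v := by
          rw [Finset.mul_sum]; apply Finset.sum_congr rfl; intro v _; ring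
      _ ≤ ∑ v, (∑ u, (if G.Adj v u then (1:ℝ) else 0) * y u) * y v := by
          apply Finset.sum_le_sum
          intro v _
          exact mul_le_mul_of_nonneg_right (hkey v) (hy v)
      _ = ∑ v, ∑ u, (if G.Adj v u then (1:ℝ) else 0) * (y v * y u) := by
          apply Finset.sum_congr rfl; intro v _
          rw [Finset.sum_mul]; apply Finset.sum_congr rfl; intro u _; ring
      _ ≤ c * ∑ v, y v ^ 2 := hQ y hy
  exact (mul_le_mul_iff_of_pos_right hT).mp hmain

end SpecRadAux

set_option maxHeartbeats 4000000 in
open SpecRadAux Finset SimpleGraph in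
/-- For a connected simple graph on `n` vertices with maximum degree `Δ` that
is not `Δ`-regular, `λ(G) ≤ √(Δ² - 4/n²) < Δ - 2/(Δn²)`. -/
theorem specRad_nonregular_bound {n : ℕ} (hn : 0 < n)
    (G : SimpleGraph (Fin n)) [DecidableRel G.Adj]
    (hconn : G.Connected) (hirr : ¬ G.IsRegularOfDegree G.maxDegree) :
    specRad (G.adjMatrix ℝ) ≤ Real.sqrt ((G.maxDegree : ℝ) ^ 2 - 4 / (n : ℝ) ^ 2) ∧
    Real.sqrt ((G.maxDegree : ℝ) ^ 2 - 4 / (n : ℝ) ^ 2)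
      < (G.maxDegree : ℝ) - 2 / ((G.maxDegree : ℝ) * (n : ℝ) ^ 2) := by
  classical
  haveI : Nonempty (Fin n) := ⟨⟨0, hn⟩⟩
  -- a deficient vertex
  obtain ⟨w, hwlt⟩ : ∃ w, G.degree w < G.maxDegree := by
    by_contra h
    push_neg at h
    exact hirr fun v => le_antisymm (G.degree_le_maxDegree v) (h v)
  have hΔ1 : 1 ≤ G.maxDegree := Nat.lt_of_le_of_lt (Nat.zero_le _) hwlt
  -- n ≥ 2
  obtain ⟨vmax, hvmax⟩ := G.exists_maximal_degree_vertex
  have hdegpos : 0 < G.degree vmax := by omega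
  obtain ⟨u0, hu0⟩ := (G.degree_pos_iff_exists_adj vmax).mp hdegpos
  have hn2 : 2 ≤ n := by
    have hne : vmax ≠ u0 := G.ne_of_adj hu0
    have := Fintype.one_lt_card_iff.mpr ⟨vmax, u0, hne⟩
    rwa [Fintype.card_fin] at this
  have hnR : (2:ℝ) ≤ (n:ℝ) := by exact_mod_cast hn2
  -- minimum degree at least 1
  have hmindeg : ∀ v, 0 < G.degree v := by
    intro v
    haveI : Nontrivial (Fin n) := by
      apply Fintype.one_lt_card_iff_nontrivial.mp
      rwa [Fintype.card_fin]
    obtain ⟨u, hu⟩ := exists_ne v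
    rw [G.degree_pos_iff_exists_adj]
    obtain ⟨p⟩ := hconn.preconnected v u
    cases p with
    | nil => exact absurd rfl hu.symm
    | cons h q => exact ⟨_, h⟩
  have hΔ2 : 2 ≤ G.maxDegree := by
    have := hmindeg w
    omega
  have hΔR : (2:ℝ) ≤ (G.maxDegree : ℝ) := by exact_mod_cast hΔ2
  -- key quadratic form bound
  have key : ∃ γ : ℝ, ((G.maxDegree : ℝ) - γ) ^ 2 ≤ (G.maxDegree : ℝ) ^ 2 - 4 / (n:ℝ)^2 ∧
      ∀ y : Fin n → ℝ, (∀ v, 0 ≤ y v) →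
        ∑ v, ∑ u, (if G.Adj v u then (1:ℝ) else 0) * (y v * y u)
          ≤ ((G.maxDegree : ℝ) - γ) * ∑ v, y v ^ 2 := by
    have hS2nonneg : ∀ y : Fin n → ℝ,
        (0:ℝ) ≤ ∑ v, ∑ u, (if G.Adj v u then (1:ℝ) else 0) * (y v - y u) ^ 2 := by
      intro y
      apply Finset.sum_nonneg; intro v _
      apply Finset.sum_nonneg; intro u _
      apply mul_nonneg _ (sq_nonneg _)
      split <;> norm_num
    have hS2dart : ∀ y : Fin n → ℝ, ∑ d : G.Dart, (y d.snd - y d.fst) ^ 2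
        = ∑ v, ∑ u, (if G.Adj v u then (1:ℝ) else 0) * (y v - y u) ^ 2 := by
      intro y
      have h0 : ∑ d : G.Dart, (y d.snd - y d.fst) ^ 2 = ∑ d : G.Dart, (y d.fst - y d.snd) ^ 2 :=
        Finset.sum_congr rfl fun d _ => by ring
      rw [h0, sum_darts_eq G (fun v u => (y v - y u)^2)]
      apply Finset.sum_congr rfl; intro v _
      apply Finset.sum_congr rfl; intro u _
      split <;> ring
    rcases Nat.lt_or_ge G.maxDegree 3 with hΔsmall | hΔ3
    · -- maxDegree = 2 : two deficient vertices
      have hΔeq : G.maxDegree = 2 := by omega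
      have hdegw : G.degree w = 1 := by
        have := hmindeg w; omega
      set O := Finset.univ.filter (fun v => Odd (G.degree v)) with hO
      have heven : Even O.card := by
        have := G.even_card_odd_degree_vertices
        convert this using 2
      have hwO : w ∈ O := by
        simp [hO, hdegw]
      have h1lt : 1 < O.card := by
        have hpos : 0 < O.card := Finset.card_pos.mpr ⟨w, hwO⟩
        rcases heven with ⟨k, hk⟩
        omega
      obtain ⟨w2, hw2O, hw2ne⟩ := Finset.exists_mem_ne h1lt w
      have hdegw2 : G.degree w2 = 1 := by
        have hodd : Odd (G.degree w2) := by
          simp only [hO, Finset.mem_filter] at hw2O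
          exact hw2O.2
        have hle := G.degree_le_maxDegree w2
        rcases hodd with ⟨m, hm⟩
        omega
      refine ⟨2 / ((n:ℝ) * (2*(n:ℝ) - 1)), ?_, ?_⟩
      · -- arithmetic comparison
        rw [hΔeq]
        have ha0 : (0:ℝ) < (n:ℝ) := by linarith
        have ha1 : (0:ℝ) < 2*(n:ℝ) - 1 := by linarith
        have hid : ((2:ℕ):ℝ)^2 - 4/(n:ℝ)^2 - (((2:ℕ):ℝ) - 2/((n:ℝ)*(2*(n:ℝ)-1)))^2
            = (8*(n:ℝ) - 8) / ((n:ℝ)^2 * (2*(n:ℝ)-1)^2) := by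
          field_simp [(by linarith : (0:ℝ) < (n:ℝ)*2 - 1).ne']
          ring
        have hpos : (0:ℝ) ≤ (8*(n:ℝ) - 8) / ((n:ℝ)^2 * (2*(n:ℝ)-1)^2) := by
          apply div_nonneg (by linarith)
          positivity
        linarith
      · intro y hy
        set T := ∑ v, y v ^ 2 with hT
        set S2 := ∑ v, ∑ u, (if G.Adj v u then (1:ℝ) else 0) * (y v - y u) ^ 2 with hS2
        have hWdef : ∀ v ∈ ({w, w2} : Finset (Fin n)), G.degree v + 1 ≤ G.maxDegree := by
          intro v hv
          rcases Finset.mem_insert.mp hv with rfl | hv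
          · omega
          · rw [Finset.mem_singleton] at hv; subst hv; omega
        have hQ := quad_decomp G y hy {w, w2} hWdef
        rw [Finset.sum_pair (Ne.symm hw2ne)] at hQ
        -- max vertex
        obtain ⟨m, _, hm⟩ := Finset.exists_max_image Finset.univ y Finset.univ_nonempty
        have hm' : ∀ v, y v ≤ y m := fun v => hm v (Finset.mem_univ v)
        have hTm : T ≤ (n:ℝ) * y m ^ 2 := by
          have : ∀ v ∈ Finset.univ, y v ^ 2 ≤ y m ^ 2 := by
            intro v _
            exact pow_le_pow_left₀ (hy v) (hm' v) 2
          have := Finset.sum_le_card_nsmul Finset.univ (fun v => y v ^ 2) (y m ^ 2) this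
          rwa [Finset.card_univ, Fintype.card_fin, nsmul_eq_mul] at this
        have hr1 := reach_sq_le G y (hconn.preconnected w m)
        have hr2 := reach_sq_le G y (hconn.preconnected w2 m)
        rw [hS2dart y] at hr1 hr2
        have hn1 : (0:ℝ) < (n:ℝ) - 1 := by linarith
        have h2n1 : (0:ℝ) ≤ 2*(n:ℝ) - 1 := by linarith
        have hstep1 : 2*((n:ℝ)-1)*(y m^2)
            ≤ (2*(n:ℝ)-1) * (2*((n:ℝ)-1)*(y w^2) + (y w - y m)^2) := by
          nlinarith [sq_nonneg ((2*(n:ℝ)-1) * y w - y m)]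
        have hstep1' : 2*((n:ℝ)-1)*(y m^2)
            ≤ (2*(n:ℝ)-1) * (2*((n:ℝ)-1)*(y w2^2) + (y w2 - y m)^2) := by
          nlinarith [sq_nonneg ((2*(n:ℝ)-1) * y w2 - y m)]
        have hsum : (y w - y m)^2 + (y w2 - y m)^2 ≤ ((n:ℝ)-1) * S2 := by
          rw [hS2]; linarith [hr1, hr2]
        have hprod : (0:ℝ) ≤ (2*(n:ℝ)-1) * (((n:ℝ)-1) * S2 - ((y w - y m)^2 + (y w2 - y m)^2)) :=
          mul_nonneg h2n1 (by linarith)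
        have h3 : 4*((n:ℝ)-1)*(y m^2)
            ≤ (2*(n:ℝ)-1) * (2*((n:ℝ)-1)*(y w^2 + y w2^2) + ((n:ℝ)-1)*S2) := by
          nlinarith [hstep1, hstep1', hprod]
        have h4 : 4*((n:ℝ)-1)*T ≤ (n:ℝ) * (4*((n:ℝ)-1)*(y m^2)) := by
          have := mul_le_mul_of_nonneg_left hTm (by linarith : (0:ℝ) ≤ 4*((n:ℝ)-1))
          nlinarith [this]
        have h5 : 4*((n:ℝ)-1)*T
            ≤ (n:ℝ) * ((2*(n:ℝ)-1) * (2*((n:ℝ)-1)*(y w^2 + y w2^2) + ((n:ℝ)-1)*S2)) := by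
          have := mul_le_mul_of_nonneg_left h3 (by linarith : (0:ℝ) ≤ (n:ℝ))
          linarith
        have hfin : 2 * T ≤ (n:ℝ) * (2*(n:ℝ)-1) * (y w ^ 2 + y w2 ^ 2 + (1/2) * S2) := by
          have hZ : (0:ℝ) < 2*((n:ℝ)-1) := by linarith
          apply le_of_mul_le_mul_left _ hZ
          have e1 : (2*((n:ℝ)-1))*(2*T) = 4*((n:ℝ)-1)*T := by ring
          have e2 : (2*((n:ℝ)-1))*((n:ℝ) * (2*(n:ℝ)-1) * (y w ^ 2 + y w2 ^ 2 + (1/2) * S2))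
              = (n:ℝ) * ((2*(n:ℝ)-1) * (2*((n:ℝ)-1)*(y w^2 + y w2^2) + ((n:ℝ)-1)*S2)) := by ring
          rw [e1, e2]
          exact h5
        have hden : (0:ℝ) < (n:ℝ) * (2*(n:ℝ) - 1) := by nlinarith
        have hdiv : 2 / ((n:ℝ) * (2*(n:ℝ) - 1)) * T ≤ y w ^ 2 + y w2 ^ 2 + (1/2) * S2 := by
          rw [div_mul_eq_mul_div, div_le_iff₀ hden]
          nlinarith [hfin]
        rw [hΔeq] at hQ ⊢
        have hQ' : ∑ v, ∑ u, (if G.Adj v u then (1:ℝ) else 0) * (y v * y u)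
            ≤ ((2:ℕ):ℝ) * T - (y w ^ 2 + y w2 ^ 2 + (1/2) * S2) := by
          rw [hT, hS2]
          linarith [hQ]
        calc ∑ v, ∑ u, (if G.Adj v u then (1:ℝ) else 0) * (y v * y u)
            ≤ ((2:ℕ):ℝ) * T - (y w ^ 2 + y w2 ^ 2 + (1/2) * S2) := hQ'
          _ ≤ ((2:ℕ):ℝ) * T - 2 / ((n:ℝ) * (2*(n:ℝ) - 1)) * T := by linarith [hdiv]
          _ = (((2:ℕ):ℝ) - 2 / ((n:ℝ) * (2*(n:ℝ) - 1))) * T := by ring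
    · -- maxDegree ≥ 3 : one deficient vertex
      have hΔ3R : (3:ℝ) ≤ (G.maxDegree : ℝ) := by exact_mod_cast hΔ3
      refine ⟨1 / (n:ℝ)^2, ?_, ?_⟩
      · have ha0 : (0:ℝ) < (n:ℝ) := by linarith
        have hid : ((G.maxDegree:ℝ)^2 - 4/(n:ℝ)^2) - ((G.maxDegree:ℝ) - 1/(n:ℝ)^2)^2
            = (2*(G.maxDegree:ℝ)*(n:ℝ)^2 - 4*(n:ℝ)^2 - 1) / (n:ℝ)^4 := by
          field_simp
          ring
        have hnum : (0:ℝ) ≤ 2*(G.maxDegree:ℝ)*(n:ℝ)^2 - 4*(n:ℝ)^2 - 1 := by nlinarith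
        have := div_nonneg hnum (by positivity : (0:ℝ) ≤ (n:ℝ)^4)
        linarith
      · intro y hy
        set T := ∑ v, y v ^ 2 with hT
        set S2 := ∑ v, ∑ u, (if G.Adj v u then (1:ℝ) else 0) * (y v - y u) ^ 2 with hS2
        have hWdef : ∀ v ∈ ({w} : Finset (Fin n)), G.degree v + 1 ≤ G.maxDegree := by
          intro v hv
          rw [Finset.mem_singleton] at hv; subst hv; omega
        have hQ := quad_decomp G y hy {w} hWdef
        rw [Finset.sum_singleton] at hQ
        obtain ⟨m, _, hm⟩ := Finset.exists_max_image Finset.univ y Finset.univ_nonempty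
        have hm' : ∀ v, y v ≤ y m := fun v => hm v (Finset.mem_univ v)
        have hTm : T ≤ (n:ℝ) * y m ^ 2 := by
          have : ∀ v ∈ Finset.univ, y v ^ 2 ≤ y m ^ 2 := by
            intro v _
            exact pow_le_pow_left₀ (hy v) (hm' v) 2
          have := Finset.sum_le_card_nsmul Finset.univ (fun v => y v ^ 2) (y m ^ 2) this
          rwa [Finset.card_univ, Fintype.card_fin, nsmul_eq_mul] at this
        have hr1 := reach_sq_le G y (hconn.preconnected w m)
        rw [hS2dart y] at hr1
        have hn1 : (0:ℝ) < (n:ℝ) - 1 := by linarith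
        have hstep1 : ((n:ℝ)-1)*(y m^2) ≤ (n:ℝ)*(((n:ℝ)-1)*(y w^2) + (y w - y m)^2) := by
          nlinarith [sq_nonneg ((n:ℝ) * y w - y m)]
        have hr1' : (y w - y m)^2 ≤ ((n:ℝ)-1)*S2/2 := by rw [hS2]; linarith [hr1]
        have hstep2 : ((n:ℝ)-1)*(y m^2)
            ≤ (n:ℝ)*(((n:ℝ)-1)*(y w^2) + ((n:ℝ)-1)*S2/2) := by
          have := mul_le_mul_of_nonneg_left hr1' (by linarith : (0:ℝ) ≤ (n:ℝ))
          nlinarith [hstep1, this]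
        have hstep3 : y m^2 ≤ (n:ℝ)*(y w^2 + (1/2)*S2) := by
          apply le_of_mul_le_mul_left _ hn1
          have e2 : ((n:ℝ)-1) * ((n:ℝ)*(y w^2 + (1/2)*S2))
              = (n:ℝ)*(((n:ℝ)-1)*(y w^2) + ((n:ℝ)-1)*S2/2) := by ring
          rw [e2]
          linarith [hstep2]
        have hfin : T ≤ (n:ℝ)^2 * (y w ^ 2 + (1/2) * S2) := by
          have := mul_le_mul_of_nonneg_left hstep3 (by linarith : (0:ℝ) ≤ (n:ℝ))
          nlinarith [hTm, this]
        have hdiv : 1 / (n:ℝ)^2 * T ≤ y w ^ 2 + (1/2) * S2 := by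
          rw [div_mul_eq_mul_div, div_le_iff₀ (by positivity)]
          nlinarith [hfin]
        calc ∑ v, ∑ u, (if G.Adj v u then (1:ℝ) else 0) * (y v * y u)
            ≤ (G.maxDegree:ℝ) * T - (y w ^ 2 + (1/2) * S2) := by
              rw [hT, hS2]; linarith [hQ]
          _ ≤ (G.maxDegree:ℝ) * T - 1 / (n:ℝ)^2 * T := by linarith [hdiv]
          _ = ((G.maxDegree:ℝ) - 1 / (n:ℝ)^2) * T := by ring
  constructor
  · obtain ⟨γ, hsq, hQb⟩ := key
    apply specRad_le_of_quad G (Real.sqrt_nonneg _)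
    intro y hy
    have hTnn : (0:ℝ) ≤ ∑ v, y v ^ 2 := Finset.sum_nonneg fun v _ => sq_nonneg _
    calc ∑ v, ∑ u, (if G.Adj v u then (1:ℝ) else 0) * (y v * y u)
        ≤ ((G.maxDegree : ℝ) - γ) * ∑ v, y v ^ 2 := hQb y hy
      _ ≤ Real.sqrt ((G.maxDegree : ℝ) ^ 2 - 4 / (n : ℝ) ^ 2) * ∑ v, y v ^ 2 :=
          mul_le_mul_of_nonneg_right (Real.le_sqrt_of_sq_le hsq) hTnn
  · -- strict inequality
    have hΔpos : (0:ℝ) < (G.maxDegree : ℝ) := by linarith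
    have hnpos : (0:ℝ) < (n:ℝ) := by linarith
    have hb4 : (4:ℝ) ≤ (G.maxDegree : ℝ) * (n:ℝ)^2 := by nlinarith
    have hfrac : 2 / ((G.maxDegree : ℝ) * (n:ℝ)^2) ≤ 2 / 4 := by
      apply div_le_div_of_nonneg_left (by norm_num) (by norm_num) hb4
    have hpos : (0:ℝ) < (G.maxDegree : ℝ) - 2 / ((G.maxDegree : ℝ) * (n:ℝ)^2) := by
      linarith
    rw [Real.sqrt_lt' hpos]
    have hid : ((G.maxDegree : ℝ) - 2 / ((G.maxDegree : ℝ) * (n:ℝ)^2))^2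
        - ((G.maxDegree : ℝ)^2 - 4/(n:ℝ)^2) = 4 / ((G.maxDegree : ℝ)^2 * (n:ℝ)^4) := by
      field_simp
      ring
    have : (0:ℝ) < 4 / ((G.maxDegree : ℝ)^2 * (n:ℝ)^4) := by positivity
    linarith
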